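/- Let μ > 0, n₀ > 0, and let φ_w ≤ φ ≤ 0 be real numbers. Then ∫_{−√((2/μ)(φ−φ_w))}^{∞} n₀·√(2μ/π)·exp(φ − μv²/2) dv = (2n₀/√(2π))·[√(2π)·e^{φ} − ∫_{√(−2φ_w)}^{∞} e^{−v²/2}·v/√(v² + 2φ) dv]. (The electron density of the stationary sheath solution at a point with potential value φ equals the electron term in the nonlinear Poisson equation.) -/

import Mathlib

open MeasureTheory Set

lemma gauss_half_line (μ φ φw : ℝ) (hμ : 0 < μ) (h : 0 ≤ φ - φw) :
    ∫ v in Ioi (-Real.sqrt ((2 / μ) * (φ - φw))), Real.exp (-(μ / 2) * v ^ 2)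
      = (Real.sqrt (2 * Real.pi) -
          ∫ x in Ioi (Real.sqrt (2 * (φ - φw))), Real.exp (-(x ^ 2) / 2)) / Real.sqrt μ := by
  set a : ℝ := Real.sqrt ((2 / μ) * (φ - φw)) with ha
  have hint : Integrable (fun v : ℝ => Real.exp (-(μ / 2) * v ^ 2)) :=
    integrable_exp_neg_mul_sq (by linarith)
  have hsplit := intervalIntegral.integral_Iic_add_Ioi (b := -a)
    hint.integrableOn hint.integrableOn
  have hrefl : (∫ v in Iic (-a), Real.exp (-(μ / 2) * v ^ 2))
      = ∫ v in Ioi a, Real.exp (-(μ / 2) * v ^ 2) := by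
    rw [← integral_comp_neg_Ioi]
    congr 1
    ext v
    ring_nf
  have hμs : (0:ℝ) < Real.sqrt μ := Real.sqrt_pos.mpr hμ
  have hcomp : (∫ v in Ioi a, Real.exp (-(μ / 2) * v ^ 2))
      = (Real.sqrt μ)⁻¹ • ∫ x in Ioi (Real.sqrt μ * a), Real.exp (-(x ^ 2) / 2) := by
    rw [← integral_comp_mul_left_Ioi (fun x => Real.exp (-(x ^ 2) / 2)) a hμs]
    congr 1
    ext v
    congr 1
    rw [mul_pow, Real.sq_sqrt hμ.le]
    ring
  have hb : Real.sqrt μ * a = Real.sqrt (2 * (φ - φw)) := by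
    rw [ha, ← Real.sqrt_mul hμ.le]
    congr 1
    field_simp
  have hgauss : (∫ v : ℝ, Real.exp (-(μ / 2) * v ^ 2)) = Real.sqrt (2 * Real.pi) / Real.sqrt μ := by
    rw [integral_gaussian (μ / 2),
      show Real.pi / (μ / 2) = 2 * Real.pi / μ by field_simp,
      Real.sqrt_div (by positivity : (0:ℝ) ≤ 2 * Real.pi)]
  rw [hb] at hcomp
  have := hsplit
  rw [hrefl, hcomp, hgauss] at this
  rw [smul_eq_mul] at this
  field_simp at this ⊢
  linarith

lemma subst_half_line (φ φw : ℝ) (hφw : φw ≤ φ) (hφ : φ ≤ 0) :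
    ∫ v in Ioi (Real.sqrt (-2 * φw)),
        Real.exp (-(v ^ 2) / 2) * v / Real.sqrt (v ^ 2 + 2 * φ)
      = Real.exp φ * ∫ x in Ioi (Real.sqrt (2 * (φ - φw))), Real.exp (-(x ^ 2) / 2) := by
  set b : ℝ := Real.sqrt (2 * (φ - φw)) with hbdef
  set c : ℝ := Real.sqrt (-2 * φw) with hcdef
  have hb0 : 0 ≤ b := Real.sqrt_nonneg _
  have hc0 : 0 ≤ c := Real.sqrt_nonneg _
  have hbsq : b ^ 2 = 2 * (φ - φw) := Real.sq_sqrt (by linarith)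
  have hcsq : c ^ 2 = -2 * φw := Real.sq_sqrt (by linarith)
  set f : ℝ → ℝ := fun w => Real.sqrt (w ^ 2 - 2 * φ) with hfdef
  have hpos : ∀ x ∈ Ioi b, 0 < x ^ 2 - 2 * φ := by
    intro x hx
    have hx0 : 0 < x := lt_of_le_of_lt hb0 hx
    nlinarith
  -- image of Ioi b under f is Ioi c
  have himg : f '' Ioi b = Ioi c := by
    ext y
    constructor
    · rintro ⟨w, hw, rfl⟩
      have hw0 : 0 < w := lt_of_le_of_lt hb0 hw
      have : -2 * φw < w ^ 2 - 2 * φ := by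
        nlinarith [hbsq, mul_pos (sub_pos.mpr hw) (by linarith : (0:ℝ) < w + b)]
      exact Real.sqrt_lt_sqrt (by linarith) this
    · intro hy
      have hy0 : 0 < y := lt_of_le_of_lt hc0 hy
      have hy2 : c ^ 2 < y ^ 2 := by
        nlinarith [mul_pos (sub_pos.mpr hy) (by linarith : (0:ℝ) < y + c)]
      have hnn : 0 ≤ y ^ 2 + 2 * φ := by nlinarith [hcsq]
      refine ⟨Real.sqrt (y ^ 2 + 2 * φ), ?_, ?_⟩
      · have : 2 * (φ - φw) < y ^ 2 + 2 * φ := by nlinarith [hcsq]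
        have := Real.sqrt_lt_sqrt (by linarith) this
        simpa [← hbdef] using this
      · simp only [hfdef]
        rw [Real.sq_sqrt hnn]
        have : y ^ 2 + 2 * φ - 2 * φ = y ^ 2 := by ring
        rw [this, Real.sqrt_sq hy0.le]
  have hderiv : ∀ x ∈ Ioi b,
      HasDerivWithinAt f (x / Real.sqrt (x ^ 2 - 2 * φ)) (Ioi b) x := by
    intro x hx
    have h1 : HasDerivAt (fun w : ℝ => w ^ 2 - 2 * φ) (2 * x) x := by
      simpa using ((hasDerivAt_pow 2 x).sub_const (2 * φ))
    have h2 := (Real.hasDerivAt_sqrt (hpos x hx).ne').comp x h1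
    have : (1 / (2 * Real.sqrt (x ^ 2 - 2 * φ))) * (2 * x)
        = x / Real.sqrt (x ^ 2 - 2 * φ) := by
      have hs : (0:ℝ) < Real.sqrt (x ^ 2 - 2 * φ) := Real.sqrt_pos.mpr (hpos x hx)
      field_simp
    rw [this] at h2
    exact h2.hasDerivWithinAt
  have hinj : InjOn f (Ioi b) := by
    intro w1 h1 w2 h2 he
    have hw1 : 0 < w1 := lt_of_le_of_lt hb0 h1
    have hw2 : 0 < w2 := lt_of_le_of_lt hb0 h2
    have := (Real.sqrt_inj (hpos w1 h1).le (hpos w2 h2).le).mp he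
    have hsq : w1 ^ 2 = w2 ^ 2 := by linarith
    calc w1 = Real.sqrt (w1 ^ 2) := (Real.sqrt_sq hw1.le).symm
      _ = Real.sqrt (w2 ^ 2) := by rw [hsq]
      _ = w2 := Real.sqrt_sq hw2.le
  have hcv := integral_image_eq_integral_abs_deriv_smul measurableSet_Ioi hderiv hinj
    (fun v => Real.exp (-(v ^ 2) / 2) * v / Real.sqrt (v ^ 2 + 2 * φ))
  rw [himg] at hcv
  rw [hcv]
  rw [← integral_const_mul]
  apply setIntegral_congr_fun measurableSet_Ioi
  intro x hx
  have hx0 : 0 < x := lt_of_le_of_lt hb0 hx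
  have hps := hpos x hx
  have hs : (0:ℝ) < Real.sqrt (x ^ 2 - 2 * φ) := Real.sqrt_pos.mpr hps
  have hfx : f x = Real.sqrt (x ^ 2 - 2 * φ) := rfl
  have hfx2 : (f x) ^ 2 = x ^ 2 - 2 * φ := Real.sq_sqrt hps.le
  simp only [smul_eq_mul]
  rw [abs_of_pos (by positivity : (0:ℝ) < x / Real.sqrt (x ^ 2 - 2 * φ))]
  rw [hfx2]
  have h1 : x ^ 2 - 2 * φ + 2 * φ = x ^ 2 := by ring
  rw [h1, Real.sqrt_sq hx0.le, hfx]
  rw [show -(x ^ 2 - 2 * φ) / 2 = φ + (-(x ^ 2) / 2) by ring, Real.exp_add]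
  field_simp

/-- The electron density of the stationary sheath solution at a point with potential
value `φ` (with `φ_w ≤ φ ≤ 0`) equals the electron term of the nonlinear Poisson
equation. -/
theorem electron_density_identity
    (μ n₀ φw φ : ℝ) (hμ : 0 < μ) (hn₀ : 0 < n₀) (hφw : φw ≤ φ) (hφ : φ ≤ 0) :
    ∫ v in Ioi (-Real.sqrt ((2 / μ) * (φ - φw))),
        n₀ * Real.sqrt (2 * μ / Real.pi) * Real.exp (φ - μ * v ^ 2 / 2) =
      (2 * n₀ / Real.sqrt (2 * Real.pi)) *
        (Real.sqrt (2 * Real.pi) * Real.exp φ -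
          ∫ v in Ioi (Real.sqrt (-2 * φw)),
            Real.exp (-(v ^ 2) / 2) * v / Real.sqrt (v ^ 2 + 2 * φ)) := by
  have hA : (0:ℝ) < Real.sqrt (2 * Real.pi) := Real.sqrt_pos.mpr (by positivity)
  have hB : (0:ℝ) < Real.sqrt μ := Real.sqrt_pos.mpr hμ
  have key : Real.sqrt (2 * μ / Real.pi) * Real.sqrt (2 * Real.pi) = 2 * Real.sqrt μ := by
    rw [← Real.sqrt_mul (by positivity), show 2 * μ / Real.pi * (2 * Real.pi) = 2 ^ 2 * μ by
      field_simp, Real.sqrt_mul (by positivity), Real.sqrt_sq (by norm_num)]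
  have hrw : ∀ v : ℝ, n₀ * Real.sqrt (2 * μ / Real.pi) * Real.exp (φ - μ * v ^ 2 / 2)
      = (n₀ * Real.sqrt (2 * μ / Real.pi) * Real.exp φ) * Real.exp (-(μ / 2) * v ^ 2) := by
    intro v
    rw [show φ - μ * v ^ 2 / 2 = φ + (-(μ / 2) * v ^ 2) by ring, Real.exp_add]
    ring
  simp_rw [hrw]
  rw [integral_const_mul, gauss_half_line μ φ φw hμ (by linarith),
    subst_half_line φ φw hφw hφ]
  rw [show 2 * n₀ / Real.sqrt (2 * Real.pi)
      = n₀ * Real.sqrt (2 * μ / Real.pi) / Real.sqrt μ by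
    rw [div_eq_div_iff hA.ne' hB.ne']; linear_combination (-n₀) * key]
  ring
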